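/- arXiv:2506.17874 — 2 statements merged into one kernel-verified Lean document; each statement's English description precedes it below -/
import Mathlib

section
/- Let g : ℝ^d → ℝ be continuously differentiable with gradient norm bounded by G and Hessian operator norm bounded by H. Then for any x and ρ ≥ 0, | sup_{‖δ‖₂ ≤ ρ} g(x + δ) − ( g(x) + ρ‖∇g(x)‖₂ ) | ≤ (H/2)·ρ². -/
open scoped RealInnerProductSpace

private lemma taylor_aux {d : ℕ} (g : EuclideanSpace ℝ (Fin d) → ℝ) (H : ℝ)
    (hC2 : ContDiff ℝ 2 g)
    (hH : ∀ x, ‖fderiv ℝ (fderiv ℝ g) x‖ ≤ H)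
    (x δ : EuclideanSpace ℝ (Fin d)) :
    |g (x + δ) - g x - fderiv ℝ g x δ| ≤ H / 2 * ‖δ‖ ^ 2 := by
  have hd1 : Differentiable ℝ g := hC2.differentiable (by norm_num)
  have hf1 : ContDiff ℝ 1 (fderiv ℝ g) := hC2.fderiv_right (by norm_num)
  have hfd : Differentiable ℝ (fderiv ℝ g) := hf1.differentiable (by norm_num)
  have lip : ∀ a b : EuclideanSpace ℝ (Fin d),
      ‖fderiv ℝ g a - fderiv ℝ g b‖ ≤ H * ‖a - b‖ := fun a b =>
    Convex.norm_image_sub_le_of_norm_fderiv_le (f := fderiv ℝ g)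
      (fun y _ => (hfd y)) (fun y _ => hH y) convex_univ trivial trivial
  -- the curve
  set c : ℝ → EuclideanSpace ℝ (Fin d) := fun t => x + t • δ with hc
  have hcderiv : ∀ t : ℝ, HasDerivAt c δ t := by
    intro t
    have : HasDerivAt (fun t : ℝ => t • δ) ((1 : ℝ) • δ) t :=
      (hasDerivAt_id t).smul_const δ
    have h2 := this.const_add x
    rw [one_smul] at h2
    exact h2
  have hφ : ∀ t : ℝ, HasDerivAt (fun t => g (c t)) (fderiv ℝ g (c t) δ) t := fun t =>
    ((hd1 (c t)).hasFDerivAt).comp_hasDerivAt t (hcderiv t)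
  have hcont : Continuous fun t => fderiv ℝ g (c t) δ := by
    have : Continuous (fderiv ℝ g) := hC2.continuous_fderiv (by norm_num)
    exact (ContinuousLinearMap.apply ℝ ℝ δ).continuous.comp
      (this.comp (by continuity))
  have hint : IntervalIntegrable (fun t => fderiv ℝ g (c t) δ)
      MeasureTheory.volume 0 1 := hcont.intervalIntegrable 0 1
  have hFTC : ∫ t in (0:ℝ)..1, fderiv ℝ g (c t) δ = g (x + δ) - g x := by
    have := intervalIntegral.integral_eq_sub_of_hasDerivAt
      (f := fun t => g (c t)) (fun t _ => hφ t) hint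
    simpa [hc] using this
  have hconst : ∫ t in (0:ℝ)..1, fderiv ℝ g x δ = fderiv ℝ g x δ := by simp
  have key : g (x + δ) - g x - fderiv ℝ g x δ
      = ∫ t in (0:ℝ)..1, (fderiv ℝ g (c t) δ - fderiv ℝ g x δ) := by
    rw [intervalIntegral.integral_sub hint (intervalIntegrable_const), hFTC, hconst]
  rw [key]
  have hbound : ∀ t ∈ Set.uIoc (0:ℝ) 1,
      ‖fderiv ℝ g (c t) δ - fderiv ℝ g x δ‖ ≤ H * ‖δ‖ ^ 2 * t := by
    intro t ht
    rw [Set.uIoc_of_le (by norm_num)] at ht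
    have ht0 : 0 < t := ht.1
    calc ‖fderiv ℝ g (c t) δ - fderiv ℝ g x δ‖
        = ‖(fderiv ℝ g (c t) - fderiv ℝ g x) δ‖ := by simp
      _ ≤ ‖fderiv ℝ g (c t) - fderiv ℝ g x‖ * ‖δ‖ :=
          (fderiv ℝ g (c t) - fderiv ℝ g x).le_opNorm δ
      _ ≤ (H * ‖c t - x‖) * ‖δ‖ := by
          gcongr; exact lip _ _
      _ = H * ‖δ‖ ^ 2 * t := by
          have : c t - x = t • δ := by simp [hc]
          rw [this, norm_smul, Real.norm_eq_abs, abs_of_pos ht0]; ring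
  have := intervalIntegral.norm_integral_le_abs_of_norm_le
    (μ := MeasureTheory.volume) (g := fun t => H * ‖δ‖ ^ 2 * t)
    (MeasureTheory.ae_restrict_of_forall_mem measurableSet_uIoc hbound)
    (by apply Continuous.intervalIntegrable; continuity)
  rw [Real.norm_eq_abs] at this
  have hH0 : 0 ≤ H := le_trans (ContinuousLinearMap.opNorm_nonneg _) (hH x)
  refine this.trans (le_of_eq ?_)
  beta_reduce
  rw [intervalIntegral.integral_const_mul, integral_id]
  rw [abs_of_nonneg (by positivity)]
  ring

/-- For g C² with ‖∇g‖ ≤ G and ‖∇²g‖_op ≤ H everywhere,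
| sup_{‖δ‖≤ρ} g(x+δ) − (g(x) + ρ‖∇g(x)‖) | ≤ (H/2)ρ². -/
theorem stmt_4 {d : ℕ} (g : EuclideanSpace ℝ (Fin d) → ℝ) (G H : ℝ)
    (hC2 : ContDiff ℝ 2 g)
    (hG : ∀ x, ‖gradient g x‖ ≤ G)
    (hH : ∀ x, ‖fderiv ℝ (fderiv ℝ g) x‖ ≤ H)
    (x : EuclideanSpace ℝ (Fin d)) (ρ : ℝ) (hρ : 0 ≤ ρ) :
    |sSup ((fun δ => g (x + δ)) '' Metric.closedBall 0 ρ) -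
      (g x + ρ * ‖gradient g x‖)| ≤ (H / 2) * ρ ^ 2 := by
  have hHpos : 0 ≤ H := le_trans (ContinuousLinearMap.opNorm_nonneg _) (hH x)
  have taylor := taylor_aux g H hC2 hH x
  set v := gradient g x with hv
  have hvnorm : ‖fderiv ℝ g x‖ = ‖v‖ := by
    rw [hv, gradient]
    exact ((InnerProductSpace.toDual ℝ _).symm.norm_map _).symm
  have hinner : ∀ δ, fderiv ℝ g x δ = ⟪v, δ⟫ := by
    intro δ
    rw [hv, gradient, InnerProductSpace.toDual_symm_apply]
  -- upper bound for elements
  have hub : ∀ y ∈ ((fun δ => g (x + δ)) '' Metric.closedBall 0 ρ),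
      y ≤ g x + ρ * ‖v‖ + H / 2 * ρ ^ 2 := by
    rintro y ⟨δ, hδ, rfl⟩
    rw [Metric.mem_closedBall, dist_zero_right] at hδ
    have h1 := (abs_le.mp (taylor δ)).2
    have h2 : fderiv ℝ g x δ ≤ ρ * ‖v‖ := by
      rw [hinner]
      calc ⟪v, δ⟫ ≤ ‖v‖ * ‖δ‖ := real_inner_le_norm v δ
        _ ≤ ρ * ‖v‖ := by rw [mul_comm]; gcongr
    have h3 : H / 2 * ‖δ‖ ^ 2 ≤ H / 2 * ρ ^ 2 := by gcongr
    linarith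
  have hne : ((fun δ => g (x + δ)) '' Metric.closedBall 0 ρ).Nonempty :=
    ⟨g (x + 0), ⟨0, by simpa using hρ, rfl⟩⟩
  have hbdd : BddAbove ((fun δ => g (x + δ)) '' Metric.closedBall 0 ρ) :=
    ⟨g x + ρ * ‖v‖ + H / 2 * ρ ^ 2, hub⟩
  -- the maximizing direction
  obtain ⟨δ₀, hδ₀n, hδ₀i⟩ : ∃ δ : EuclideanSpace ℝ (Fin d),
      ‖δ‖ ≤ ρ ∧ ⟪v, δ⟫ = ρ * ‖v‖ := by
    by_cases hv0 : v = 0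
    · exact ⟨0, by simpa using hρ, by simp [hv0]⟩
    · refine ⟨(ρ / ‖v‖) • v, ?_, ?_⟩
      · rw [norm_smul, Real.norm_eq_abs, abs_of_nonneg (by positivity),
          div_mul_cancel₀ _ (norm_ne_zero_iff.mpr hv0)]
      · have hvn : ‖v‖ ≠ 0 := norm_ne_zero_iff.mpr hv0
        rw [real_inner_smul_right, real_inner_self_eq_norm_sq]
        field_simp
  have hlow : g x + ρ * ‖v‖ - H / 2 * ρ ^ 2 ≤
      sSup ((fun δ => g (x + δ)) '' Metric.closedBall 0 ρ) := by
    have hmem : g (x + δ₀) ∈ (fun δ => g (x + δ)) '' Metric.closedBall 0 ρ :=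
      ⟨δ₀, by simpa [Metric.mem_closedBall, dist_zero_right] using hδ₀n, rfl⟩
    have h1 := (abs_le.mp (taylor δ₀)).1
    have h2 : H / 2 * ‖δ₀‖ ^ 2 ≤ H / 2 * ρ ^ 2 := by gcongr
    have := le_csSup hbdd hmem
    rw [hinner, hδ₀i] at h1
    linarith
  have hhigh : sSup ((fun δ => g (x + δ)) '' Metric.closedBall 0 ρ) ≤
      g x + ρ * ‖v‖ + H / 2 * ρ ^ 2 := csSup_le hne hub
  rw [abs_le]
  constructor <;> linarith
end

section
/- Let g₁,…,gₙ : ℝ^d → ℝ be functions each with gradient norm bounded by G and Hessian operator norm bounded by H (in C²). Define D = (1/n)Σᵢ sup_{‖δ‖₂≤ρ} gᵢ(xᵢ + δ) and R = (1/n)Σᵢ gᵢ(xᵢ) + ρ·(1/n)Σᵢ ‖∇gᵢ(xᵢ)‖₂. Then |D − R| ≤ (H/2)·ρ². -/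
open scoped RealInnerProductSpace

section taylor
variable {E : Type*} [NormedAddCommGroup E] [InnerProductSpace ℝ E]

lemma fderiv_lip (g : E → ℝ) (hC2 : ContDiff ℝ 2 g) (H : ℝ)
    (hH : ∀ x', ‖fderiv ℝ (fderiv ℝ g) x'‖ ≤ H) (y z : E) :
    ‖fderiv ℝ g y - fderiv ℝ g z‖ ≤ H * ‖y - z‖ := by
  have hdiff : ContDiff ℝ 1 (fderiv ℝ g) := hC2.fderiv_right (by norm_num)
  exact Convex.norm_image_sub_le_of_norm_fderiv_le
    (fun x _ => (hdiff.differentiable (by norm_num)) x) (fun x _ => hH x) convex_univ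
    (Set.mem_univ z) (Set.mem_univ y)

lemma taylor_bound (g : E → ℝ) (hC2 : ContDiff ℝ 2 g) (H : ℝ)
    (hH : ∀ x', ‖fderiv ℝ (fderiv ℝ g) x'‖ ≤ H) (a δ : E) :
    |g (a + δ) - g a - fderiv ℝ g a δ| ≤ H / 2 * ‖δ‖ ^ 2 := by
  set φ' : ℝ → ℝ := fun t => fderiv ℝ g (a + t • δ) δ with hφ'
  have hline : ∀ t : ℝ, HasDerivAt (fun s : ℝ => a + s • δ) δ t := by
    intro t
    simpa using ((hasDerivAt_id t).smul_const δ).const_add a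
  have hφd : ∀ t : ℝ, HasDerivAt (fun s => g (a + s • δ)) (φ' t) t := by
    intro t
    exact ((hC2.differentiable (by norm_num) (a + t • δ)).hasFDerivAt).comp_hasDerivAt t (hline t)
  have hcont : Continuous φ' := by
    have : Continuous (fderiv ℝ g) := (hC2.fderiv_right (m:=1) (by norm_num)).continuous
    exact (ContinuousLinearMap.apply ℝ ℝ δ).continuous.comp
      (this.comp (continuous_const.add (continuous_id.smul continuous_const)))
  have hint : IntervalIntegrable φ' MeasureTheory.volume 0 1 :=
    hcont.intervalIntegrable 0 1
  have hftc : ∫ t in (0:ℝ)..1, φ' t = g (a + δ) - g a := by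
    have := intervalIntegral.integral_eq_sub_of_hasDerivAt
      (fun t _ => hφd t) hint
    simpa using this
  have hc : IntervalIntegrable (fun _ : ℝ => fderiv ℝ g a δ) MeasureTheory.volume 0 1 :=
    intervalIntegrable_const
  have hkey : g (a + δ) - g a - fderiv ℝ g a δ = ∫ t in (0:ℝ)..1, (φ' t - fderiv ℝ g a δ) := by
    rw [intervalIntegral.integral_sub hint hc, hftc, intervalIntegral.integral_const]
    simp
  rw [hkey]
  have hb : ∀ t ∈ Set.uIoc (0:ℝ) 1, ‖φ' t - fderiv ℝ g a δ‖ ≤ (H * ‖δ‖ ^ 2) * t := by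
    intro t ht
    rw [Set.uIoc_of_le (by norm_num : (0:ℝ) ≤ 1)] at ht
    have ht0 : 0 < t := ht.1
    have : φ' t - fderiv ℝ g a δ = (fderiv ℝ g (a + t • δ) - fderiv ℝ g a) δ := by
      simp [hφ']
    rw [this]
    calc ‖(fderiv ℝ g (a + t • δ) - fderiv ℝ g a) δ‖
        ≤ ‖fderiv ℝ g (a + t • δ) - fderiv ℝ g a‖ * ‖δ‖ :=
          (fderiv ℝ g (a + t • δ) - fderiv ℝ g a).le_opNorm δ
      _ ≤ (H * ‖a + t • δ - a‖) * ‖δ‖ := by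
          gcongr; exact fderiv_lip g hC2 H hH _ _
      _ = (H * ‖δ‖ ^ 2) * t := by
          simp [norm_smul, abs_of_pos ht0]; ring
  have := intervalIntegral.norm_integral_le_abs_of_norm_le
    (μ := MeasureTheory.volume) (f := fun t => φ' t - fderiv ℝ g a δ) (g := fun t => (H * ‖δ‖ ^ 2) * t)
    (MeasureTheory.ae_restrict_of_forall_mem measurableSet_uIoc hb)
    ((continuous_const.mul continuous_id).intervalIntegrable 0 1)
  have hH0 : 0 ≤ H := le_trans (norm_nonneg (fderiv ℝ (fderiv ℝ g) a)) (hH a)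
  calc |∫ t in (0:ℝ)..1, (φ' t - fderiv ℝ g a δ)| ≤ |∫ t in (0:ℝ)..1, (H * ‖δ‖ ^ 2) * t| := by
        simpa using this
    _ = H / 2 * ‖δ‖ ^ 2 := by
        rw [intervalIntegral.integral_const_mul, integral_id]
        rw [abs_of_nonneg (by positivity)]; ring

variable [CompleteSpace E]


lemma key_i (g : E → ℝ) (hC2 : ContDiff ℝ 2 g) (H ρ : ℝ) (hρ : 0 ≤ ρ)
    (hH : ∀ x', ‖fderiv ℝ (fderiv ℝ g) x'‖ ≤ H)
    (taylor : ∀ a δ : E, |g (a + δ) - g a - fderiv ℝ g a δ| ≤ H / 2 * ‖δ‖ ^ 2)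
    (a : E) :
    |sSup ((fun δ => g (a + δ)) '' Metric.closedBall 0 ρ) - (g a + ρ * ‖gradient g a‖)| ≤
      H / 2 * ρ ^ 2 := by
  set v := gradient g a with hv
  have hH0 : 0 ≤ H := le_trans (norm_nonneg (fderiv ℝ (fderiv ℝ g) a)) (hH a)
  have hfd : fderiv ℝ g a = InnerProductSpace.toDual ℝ E v :=
    ((hasGradientAt_iff_hasFDerivAt).1 (hC2.differentiable (by norm_num) a).hasGradientAt).fderiv
  have hinner : ∀ δ : E, fderiv ℝ g a δ = ⟪v, δ⟫ := by
    intro δ; rw [hfd]; rfl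
  set S := (fun δ => g (a + δ)) '' Metric.closedBall 0 ρ with hS
  have hne : S.Nonempty := ⟨g (a + 0), ⟨0, by simpa using hρ, rfl⟩⟩
  have hub : ∀ y ∈ S, y ≤ g a + ρ * ‖v‖ + H / 2 * ρ ^ 2 := by
    rintro y ⟨δ, hδ, rfl⟩
    rw [Metric.mem_closedBall, dist_zero_right] at hδ
    have h1 := (abs_le.1 (taylor a δ)).2
    have h2 : fderiv ℝ g a δ ≤ ‖v‖ * ρ := by
      rw [hinner]
      calc ⟪v, δ⟫ ≤ ‖v‖ * ‖δ‖ := real_inner_le_norm v δ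
        _ ≤ ‖v‖ * ρ := by gcongr
    have h3 : H / 2 * ‖δ‖ ^ 2 ≤ H / 2 * ρ ^ 2 := by
      have := pow_le_pow_left₀ (norm_nonneg δ) hδ 2
      nlinarith
    nlinarith
  have hbdd : BddAbove S := ⟨_, hub⟩
  have hupper : sSup S ≤ g a + ρ * ‖v‖ + H / 2 * ρ ^ 2 := csSup_le hne hub
  have hlower : g a + ρ * ‖v‖ - H / 2 * ρ ^ 2 ≤ sSup S := by
    by_cases hv0 : v = 0
    · have : g (a + 0) ≤ sSup S := le_csSup hbdd ⟨0, by simpa using hρ, rfl⟩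
      simp only [add_zero] at this
      rw [hv0]
      simp only [norm_zero, mul_zero, add_zero]
      nlinarith
    · set δ₀ : E := (ρ / ‖v‖) • v with hδ₀
      have hvn : 0 < ‖v‖ := norm_pos_iff.2 hv0
      have hδn : ‖δ₀‖ = ρ := by
        rw [hδ₀, norm_smul, Real.norm_eq_abs, abs_of_nonneg (by positivity)]
        field_simp
      have hmem : δ₀ ∈ Metric.closedBall (0 : E) ρ := by
        rw [Metric.mem_closedBall, dist_zero_right, hδn]
      have hin : fderiv ℝ g a δ₀ = ρ * ‖v‖ := by
        rw [hinner, hδ₀, real_inner_smul_right, real_inner_self_eq_norm_sq]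
        field_simp
      have h1 := (abs_le.1 (taylor a δ₀)).1
      have : g (a + δ₀) ≤ sSup S := le_csSup hbdd ⟨δ₀, hmem, rfl⟩
      rw [hin, hδn] at h1
      linarith
  rw [abs_le]
  constructor <;> linarith
end taylor

theorem stmt_6 {d : ℕ} (n : ℕ) (hn : 0 < n)
    (g : Fin n → EuclideanSpace ℝ (Fin d) → ℝ)
    (x : Fin n → EuclideanSpace ℝ (Fin d)) (G H ρ : ℝ) (hρ : 0 ≤ ρ)
    (hC2 : ∀ i, ContDiff ℝ 2 (g i))
    (hG : ∀ i x', ‖gradient (g i) x'‖ ≤ G)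
    (hH : ∀ i x', ‖fderiv ℝ (fderiv ℝ (g i)) x'‖ ≤ H) :
    |(1 / n : ℝ) * ∑ i : Fin n,
        sSup ((fun δ => g i (x i + δ)) '' Metric.closedBall 0 ρ) -
      ((1 / n : ℝ) * ∑ i : Fin n, g i (x i) +
        ρ * ((1 / n : ℝ) * ∑ i : Fin n, ‖gradient (g i) (x i)‖))| ≤
    (H / 2) * ρ ^ 2 := by
  set s : Fin n → ℝ := fun i => sSup ((fun δ => g i (x i + δ)) '' Metric.closedBall 0 ρ) with hs
  set r : Fin n → ℝ := fun i => g i (x i) + ρ * ‖gradient (g i) (x i)‖ with hr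
  have hi : ∀ i, |s i - r i| ≤ H / 2 * ρ ^ 2 := fun i =>
    key_i (g i) (hC2 i) H ρ hρ (hH i) (taylor_bound (g i) (hC2 i) H (hH i)) (x i)
  have heq : (1 / n : ℝ) * ∑ i : Fin n, s i -
      ((1 / n : ℝ) * ∑ i : Fin n, g i (x i) +
        ρ * ((1 / n : ℝ) * ∑ i : Fin n, ‖gradient (g i) (x i)‖)) =
      (1 / n : ℝ) * ∑ i : Fin n, (s i - r i) := by
    simp only [hr, Finset.sum_sub_distrib, Finset.sum_add_distrib, ← Finset.mul_sum]
    ring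
  rw [heq, abs_mul, abs_of_nonneg (by positivity : (0:ℝ) ≤ 1 / n)]
  have hsum : |∑ i : Fin n, (s i - r i)| ≤ n * (H / 2 * ρ ^ 2) := by
    calc |∑ i : Fin n, (s i - r i)| ≤ ∑ i : Fin n, |s i - r i| :=
          Finset.abs_sum_le_sum_abs _ _
      _ ≤ ∑ _i : Fin n, H / 2 * ρ ^ 2 := Finset.sum_le_sum fun i _ => hi i
      _ = n * (H / 2 * ρ ^ 2) := by simp [mul_comm]
  have hn' : (0:ℝ) < n := by exact_mod_cast hn
  calc (1 / n : ℝ) * |∑ i : Fin n, (s i - r i)| ≤ (1 / n : ℝ) * (n * (H / 2 * ρ ^ 2)) := by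
        gcongr
    _ = H / 2 * ρ ^ 2 := by field_simp
end
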